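/- Let C be an arrovian voting system on at least three alternatives. If in some profile the aggregate ordering satisfies a ≽ b, then the supporting set K = {i ∈ I : a ≽_i b} is a decisive subset. -/
import Mathlib

variable {A I : Type*}

/-- A partial preorder: a reflexive and transitive binary relation. -/
def IsPPO (P : A → A → Prop) : Prop := Reflexive P ∧ Transitive P

/-- A linear (total) preorder: reflexive, transitive and complete. -/
def IsLPO (P : A → A → Prop) : Prop := Reflexive P ∧ Transitive P ∧ ∀ a b, P a b ∨ P b a

/-- A profile of partial preorders. -/
def IsPPOProfile (P : I → A → A → Prop) : Prop := ∀ i, IsPPO (P i)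

/-- A profile of linear (total) preorders. -/
def IsLPOProfile (P : I → A → A → Prop) : Prop := ∀ i, IsLPO (P i)

/-- Strict preference. -/
def StrictPref (P : A → A → Prop) (a b : A) : Prop := P a b ∧ ¬ P b a

/-- Indifference. -/
def Indiff (P : A → A → Prop) (a b : A) : Prop := P a b ∧ P b a

/-- The set `A` contains at least three distinct alternatives. -/
def ThreeAlts (A : Type*) : Prop := ∃ a b c : A, a ≠ b ∧ b ≠ c ∧ a ≠ c

/-- Unanimity. -/
def Unanimity (C : (I → A → A → Prop) → A → A → Prop) : Prop :=
  ∀ P, IsPPOProfile P → ∀ a b : A, (∀ i, P i a b) → C P a b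

/-- Independence of irrelevant alternatives. -/
def IIA (C : (I → A → A → Prop) → A → A → Prop) : Prop :=
  ∀ P P' : I → A → A → Prop, IsPPOProfile P → IsPPOProfile P' → ∀ a b : A,
    {i | P i a b} = {i | P' i a b} → {i | P i b a} = {i | P' i b a} →
    (C P a b ↔ C P' a b)

/-- Neutrality: `C (ρ*P) = ρ*(C P)` for every permutation `ρ` of the alternatives. -/
def Neutrality (C : (I → A → A → Prop) → A → A → Prop) : Prop :=
  ∀ (ρ : Equiv.Perm A) (P : I → A → A → Prop), IsPPOProfile P →
    ∀ x y : A, C (fun i a b => P i (ρ.symm a) (ρ.symm b)) x y ↔ C P (ρ.symm x) (ρ.symm y)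

/-- Monotonicity. -/
def Monotonicity (C : (I → A → A → Prop) → A → A → Prop) : Prop :=
  ∀ P P' : I → A → A → Prop, IsPPOProfile P → IsPPOProfile P' → ∀ a b : A,
    {i | P i a b} ⊆ {i | P' i a b} → {i | P' i b a} ⊆ {i | P i b a} →
    C P a b → C P' a b

/-- `J` is a decisive set: unanimous strict preference on `J` forces weak aggregate preference. -/
def Decisive (C : (I → A → A → Prop) → A → A → Prop) (J : Set I) : Prop :=
  ∀ P, IsPPOProfile P → ∀ a b : A, (∀ j ∈ J, StrictPref (P j) a b) → C P a b

/-- `J` is a strongly decisive set: unanimous weak preference on `J` forces weak aggregate preference. -/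
def SDecisive (C : (I → A → A → Prop) → A → A → Prop) (J : Set I) : Prop :=
  ∀ P, IsPPOProfile P → ∀ a b : A, (∀ j ∈ J, P j a b) → C P a b

/-- Auxiliary: a relation specified on the three ordered pairs among `a, b, c`. -/
def Rel3 (a b c : A) (pab pba pac pca pbc pcb : Prop) : A → A → Prop :=
  fun x y => x = y ∨ (x = a ∧ y = b ∧ pab) ∨ (x = b ∧ y = a ∧ pba) ∨
    (x = a ∧ y = c ∧ pac) ∨ (x = c ∧ y = a ∧ pca) ∨
    (x = b ∧ y = c ∧ pbc) ∨ (x = c ∧ y = b ∧ pcb)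

section Rel3

variable {a b c : A} {pab pba pac pca pbc pcb : Prop}

lemma Rel3_ab (hab : a ≠ b) (hac : a ≠ c) (hbc : b ≠ c) :
    Rel3 a b c pab pba pac pca pbc pcb a b ↔ pab := by
  simp [Rel3, hab, hac, hbc, hab.symm, hac.symm, hbc.symm]

lemma Rel3_ba (hab : a ≠ b) (hac : a ≠ c) (hbc : b ≠ c) :
    Rel3 a b c pab pba pac pca pbc pcb b a ↔ pba := by
  simp [Rel3, hab, hac, hbc, hab.symm, hac.symm, hbc.symm]

lemma Rel3_ac (hab : a ≠ b) (hac : a ≠ c) (hbc : b ≠ c) :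
    Rel3 a b c pab pba pac pca pbc pcb a c ↔ pac := by
  simp [Rel3, hab, hac, hbc, hab.symm, hac.symm, hbc.symm]

lemma Rel3_ca (hab : a ≠ b) (hac : a ≠ c) (hbc : b ≠ c) :
    Rel3 a b c pab pba pac pca pbc pcb c a ↔ pca := by
  simp [Rel3, hab, hac, hbc, hab.symm, hac.symm, hbc.symm]

lemma Rel3_bc (hab : a ≠ b) (hac : a ≠ c) (hbc : b ≠ c) :
    Rel3 a b c pab pba pac pca pbc pcb b c ↔ pbc := by
  simp [Rel3, hab, hac, hbc, hab.symm, hac.symm, hbc.symm]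

lemma Rel3_cb (hab : a ≠ b) (hac : a ≠ c) (hbc : b ≠ c) :
    Rel3 a b c pab pba pac pca pbc pcb c b ↔ pcb := by
  simp [Rel3, hab, hac, hbc, hab.symm, hac.symm, hbc.symm]

lemma Rel3_isPPO (hab : a ≠ b) (hac : a ≠ c) (hbc : b ≠ c)
    (tabc : pab → pbc → pac) (tacb : pac → pcb → pab)
    (tbac : pba → pac → pbc) (tbca : pbc → pca → pba)
    (tcab : pca → pab → pcb) (tcba : pcb → pba → pca) :
    IsPPO (Rel3 a b c pab pba pac pca pbc pcb) := by
  constructor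
  · intro x; exact Or.inl rfl
  · intro x y z hxy hyz
    unfold Rel3 at *
    rcases hxy with rfl | ⟨rfl, rfl, h1⟩ | ⟨rfl, rfl, h1⟩ | ⟨rfl, rfl, h1⟩ |
      ⟨rfl, rfl, h1⟩ | ⟨rfl, rfl, h1⟩ | ⟨rfl, rfl, h1⟩ <;>
    rcases hyz with rfl | ⟨h2a, rfl, h2⟩ | ⟨h2a, rfl, h2⟩ | ⟨h2a, rfl, h2⟩ |
      ⟨h2a, rfl, h2⟩ | ⟨h2a, rfl, h2⟩ | ⟨h2a, rfl, h2⟩ <;>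
    all_goals first
    | (exact Or.inl rfl)
    | (exact hxy)
    | simp_all

end Rel3

section Lemmas

variable {C : (I → A → A → Prop) → A → A → Prop}

/-- Transfer lemma: from `C P₀ u v`, control of pair `(u,w)`. -/
lemma lemT (hC : ∀ P, IsPPOProfile P → IsPPO (C P))
    (hU : Unanimity C) (hIIA : IIA C)
    {u v w : A} (huv : u ≠ v) (huw : u ≠ w) (hvw : v ≠ w)
    {P₀ Q : I → A → A → Prop} (hP₀ : IsPPOProfile P₀) (hQ : IsPPOProfile Q)
    (hCP : C P₀ u v)
    (h1 : ∀ i, P₀ i u v → Q i u w) (h2 : ∀ i, ¬ Q i w u) : C Q u w := by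
  set R : I → A → A → Prop :=
    fun i => Rel3 u v w (P₀ i u v) (P₀ i v u) (Q i u w) (Q i w u) True False with hR_def
  have hR : IsPPOProfile R := fun i =>
    Rel3_isPPO huv huw hvw (fun h _ => h1 i h) (fun _ h => h.elim)
      (fun _ _ => trivial) (fun _ h => (h2 i h).elim)
      (fun h _ => (h2 i h).elim) (fun h _ => h.elim)
  have hRuv : C R u v := by
    refine (hIIA P₀ R hP₀ hR u v ?_ ?_).mp hCP
    · ext i; simp only [Set.mem_setOf_eq, hR_def, Rel3_ab huv huw hvw]
    · ext i; simp only [Set.mem_setOf_eq, hR_def, Rel3_ba huv huw hvw]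
  have hRvw : C R v w := hU R hR v w (fun i => (Rel3_bc huv huw hvw).mpr trivial)
  have hRuw : C R u w := (hC R hR).2 hRuv hRvw
  refine (hIIA R Q hR hQ u w ?_ ?_).mp hRuw
  · ext i; simp only [Set.mem_setOf_eq, hR_def, Rel3_ac huv huw hvw]
  · ext i; simp only [Set.mem_setOf_eq, hR_def, Rel3_ca huv huw hvw]

/-- Transfer lemma: from `C P₀ u v`, control of pair `(w,v)`. -/
lemma lemT' (hC : ∀ P, IsPPOProfile P → IsPPO (C P))
    (hU : Unanimity C) (hIIA : IIA C)
    {u v w : A} (huv : u ≠ v) (huw : u ≠ w) (hvw : v ≠ w)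
    {P₀ Q : I → A → A → Prop} (hP₀ : IsPPOProfile P₀) (hQ : IsPPOProfile Q)
    (hCP : C P₀ u v)
    (h1 : ∀ i, P₀ i u v → Q i w v) (h2 : ∀ i, ¬ Q i v w) : C Q w v := by
  set R : I → A → A → Prop :=
    fun i => Rel3 u v w (P₀ i u v) (P₀ i v u) False True (Q i v w) (Q i w v) with hR_def
  have hR : IsPPOProfile R := fun i =>
    Rel3_isPPO huv huw hvw (fun _ h => (h2 i h).elim) (fun h _ => h.elim)
      (fun _ h => h.elim) (fun h _ => (h2 i h).elim)
      (fun _ h => h1 i h) (fun _ _ => trivial)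
  have hRuv : C R u v := by
    refine (hIIA P₀ R hP₀ hR u v ?_ ?_).mp hCP
    · ext i; simp only [Set.mem_setOf_eq, hR_def, Rel3_ab huv huw hvw]
    · ext i; simp only [Set.mem_setOf_eq, hR_def, Rel3_ba huv huw hvw]
  have hRwu : C R w u := hU R hR w u (fun i => (Rel3_ca huv huw hvw).mpr trivial)
  have hRwv : C R w v := (hC R hR).2 hRwu hRuv
  refine (hIIA R Q hR hQ w v ?_ ?_).mp hRwv
  · ext i; simp only [Set.mem_setOf_eq, hR_def, Rel3_cb huv huw hvw]
  · ext i; simp only [Set.mem_setOf_eq, hR_def, Rel3_bc huv huw hvw]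

end Lemmas

theorem decisive_support [Fintype I] (C : (I → A → A → Prop) → A → A → Prop)
    (hA : ThreeAlts A)
    (hC : ∀ P, IsPPOProfile P → IsPPO (C P))
    (hU : Unanimity C) (hIIA : IIA C) :
    ∀ P : I → A → A → Prop, IsPPOProfile P → ∀ a b : A,
      C P a b → Decisive C {i | P i a b} := by
  intro P hP a b hCab
  intro Q hQ x y hstr
  simp only [Set.mem_setOf_eq] at hstr
  -- trivial case x = y
  by_cases hxy : x = y
  · subst hxy; exact (hC Q hQ).1 x
  -- a third alternative always exists
  have third : ∀ u v : A, ∃ w, w ≠ u ∧ w ≠ v := by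
    obtain ⟨p, q, r, hpq, hqr, hpr⟩ := hA
    intro u v
    by_cases hpu : p = u
    · by_cases hqv : q = v
      · exact ⟨r, fun h => hpr (hpu.trans h.symm), fun h => hqr (hqv.trans h.symm)⟩
      · by_cases hqu : q = u
        · exact absurd (hqu.trans hpu.symm) (Ne.symm hpq)
        · exact ⟨q, hqu, hqv⟩
    · by_cases hpv : p = v
      · by_cases hqu : q = u
        · exact ⟨r, fun h => hqr (hqu.trans h.symm), fun h => hpr (hpv.trans h.symm)⟩
        · by_cases hqv : q = v
          · exact absurd (hqv.trans hpv.symm) (Ne.symm hpq)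
          · exact ⟨q, hqu, hqv⟩
      · exact ⟨p, hpu, hpv⟩
  -- degenerate case a = b : everybody supports, use unanimity
  by_cases hab : a = b
  · subst hab
    exact hU Q hQ x y (fun i => (hstr i ((hP i).1 a)).1)
  -- the key decisiveness predicate
  set D : A → A → Prop := fun u v => ∀ Q', IsPPOProfile Q' →
    (∀ i, P i a b → Q' i u v) → (∀ i, ¬ Q' i v u) → C Q' u v with hD_def
  obtain ⟨c₀, hc₀a, hc₀b⟩ := third a b
  have base : D a c₀ := by
    intro Q' hQ' h1 h2
    exact lemT hC hU hIIA hab (Ne.symm hc₀a) (Ne.symm hc₀b) hP hQ' hCab h1 h2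
  -- spreading lemmas
  have spread1 : ∀ u v w : A, u ≠ v → w ≠ u → w ≠ v → D u v → D u w := by
    intro u v w huv hwu hwv hDuv Q' hQ' h1 h2
    set P₀ : I → A → A → Prop :=
      fun i => Rel3 u v w (P i a b) False False False False False with hP₀_def
    have hP₀ : IsPPOProfile P₀ := fun i =>
      Rel3_isPPO huv (Ne.symm hwu) (Ne.symm hwv)
        (fun _ h => h.elim) (fun h _ => h.elim) (fun h _ => h.elim)
        (fun h _ => h.elim) (fun h _ => h.elim) (fun h _ => h.elim)
    have hP₀uv : ∀ i, P₀ i u v ↔ P i a b := fun i =>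
      Rel3_ab huv (Ne.symm hwu) (Ne.symm hwv)
    have hP₀vu : ∀ i, P₀ i v u ↔ False := fun i =>
      Rel3_ba huv (Ne.symm hwu) (Ne.symm hwv)
    have hCP₀ : C P₀ u v :=
      hDuv P₀ hP₀ (fun i h => (hP₀uv i).mpr h) (fun i h => (hP₀vu i).mp h)
    exact lemT hC hU hIIA huv (Ne.symm hwu) (Ne.symm hwv) hP₀ hQ' hCP₀
      (fun i h => h1 i ((hP₀uv i).mp h)) h2
  have spread2 : ∀ u v w : A, u ≠ v → w ≠ u → w ≠ v → D u v → D w v := by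
    intro u v w huv hwu hwv hDuv Q' hQ' h1 h2
    set P₀ : I → A → A → Prop :=
      fun i => Rel3 u v w (P i a b) False False False False False with hP₀_def
    have hP₀ : IsPPOProfile P₀ := fun i =>
      Rel3_isPPO huv (Ne.symm hwu) (Ne.symm hwv)
        (fun _ h => h.elim) (fun h _ => h.elim) (fun h _ => h.elim)
        (fun h _ => h.elim) (fun h _ => h.elim) (fun h _ => h.elim)
    have hP₀uv : ∀ i, P₀ i u v ↔ P i a b := fun i =>
      Rel3_ab huv (Ne.symm hwu) (Ne.symm hwv)
    have hP₀vu : ∀ i, P₀ i v u ↔ False := fun i =>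
      Rel3_ba huv (Ne.symm hwu) (Ne.symm hwv)
    have hCP₀ : C P₀ u v :=
      hDuv P₀ hP₀ (fun i h => (hP₀uv i).mpr h) (fun i h => (hP₀vu i).mp h)
    exact lemT' hC hU hIIA huv (Ne.symm hwu) (Ne.symm hwv) hP₀ hQ' hCP₀
      (fun i h => h1 i ((hP₀uv i).mp h)) h2
  -- D holds for every pair of distinct alternatives
  have all : ∀ u v : A, u ≠ v → D u v := by
    intro u v huv
    have phase1 : ∃ z, z ≠ u ∧ D u z := by
      by_cases hua : u = a
      · exact ⟨c₀, by rw [hua]; exact hc₀a, hua ▸ base⟩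
      · by_cases huc : u = c₀
        · have hDab : D a b := spread1 a c₀ b (Ne.symm hc₀a) (Ne.symm hab) (Ne.symm hc₀b) base
          have hDcb : D c₀ b := spread2 a b c₀ hab hc₀a hc₀b hDab
          exact ⟨b, by rw [huc]; exact Ne.symm hc₀b, huc ▸ hDcb⟩
        · exact ⟨c₀, fun h => huc h.symm,
            spread2 a c₀ u (Ne.symm hc₀a) (fun h => hua h) (fun h => huc h) base⟩
    obtain ⟨z, hzu, hDuz⟩ := phase1
    by_cases hvz : v = z
    · exact hvz ▸ hDuz
    · exact spread1 u z v (fun h => hzu h.symm) (Ne.symm huv) hvz hDuz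
  -- final construction
  obtain ⟨c, hcx, hcy⟩ := third x y
  have hDxc : D x c := all x c (Ne.symm hcx)
  have hDcy : D c y := all c y hcy
  set R : I → A → A → Prop :=
    fun i => Rel3 x y c (Q i x y) (Q i y x) (P i a b) False False (P i a b) with hR_def
  have hR : IsPPOProfile R := fun i =>
    Rel3_isPPO hxy (Ne.symm hcx) (Ne.symm hcy)
      (fun _ h => h.elim)
      (fun h _ => (hstr i h).1)
      (fun hyx h => ((hstr i h).2 hyx).elim)
      (fun _ h => h.elim)
      (fun h _ => h.elim)
      (fun h hyx => ((hstr i h).2 hyx).elim)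
  have hRxc : C R x c :=
    hDxc R hR (fun i h => (Rel3_ac hxy (Ne.symm hcx) (Ne.symm hcy)).mpr h)
      (fun i h => (Rel3_ca hxy (Ne.symm hcx) (Ne.symm hcy)).mp h)
  have hRcy : C R c y :=
    hDcy R hR (fun i h => (Rel3_cb hxy (Ne.symm hcx) (Ne.symm hcy)).mpr h)
      (fun i h => (Rel3_bc hxy (Ne.symm hcx) (Ne.symm hcy)).mp h)
  have hRxy : C R x y := (hC R hR).2 hRxc hRcy
  refine (hIIA R Q hR hQ x y ?_ ?_).mp hRxy
  · ext i; simp only [Set.mem_setOf_eq, hR_def, Rel3_ab hxy (Ne.symm hcx) (Ne.symm hcy)]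
  · ext i; simp only [Set.mem_setOf_eq, hR_def, Rel3_ba hxy (Ne.symm hcx) (Ne.symm hcy)]
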